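/- Let N⁺, N⁻ ≥ 1 be integers and α = (α⁺, α⁻) with α⁺ ≤ N⁺ and α⁻ ≤ N⁻. If 2α⁺ > N⁺ or 2α⁻ > N⁻, then there exist a linearly separable training set (D⁺, D⁻) of feature vectors in ℝ² with card D⁺ = N⁺ and card D⁻ = N⁻, an α-bounded feature attack (E⁺, E⁻) on (D⁺, D⁻), and an affine classifier ĥ such that: ĥ satisfies the majority constraint on (E⁺, E⁻); ĥ minimizes the total 0-1 error err⁺(h, E⁺) + err⁻(h, E⁻) among all affine classifiers h satisfying the majority constraint on (E⁺, E⁻); and ĥ misclassifies every element of D⁺ or every element of D⁻. (Thus the majority 0-1 loss linear classification algorithm is perfectly attackable when the attacker can tamper more than half of the positive or of the negative training data.) -/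

import Mathlib

open scoped Classical BigOperators

/-- Value of the affine classifier `h = (w, b)` at feature vector `x`. -/
noncomputable def hval {p : ℕ} (h : (Fin p → ℝ) × ℝ) (x : Fin p → ℝ) : ℝ :=
  (∑ i, h.1 i * x i) + h.2

/-- Number of positive feature vectors in `S` misclassified by `h` (with multiplicity). -/
noncomputable def errPos {p : ℕ} (h : (Fin p → ℝ) × ℝ) (S : Multiset (Fin p → ℝ)) : ℕ :=
  Multiset.countP (fun x => hval h x ≤ 0) S

/-- Number of negative feature vectors in `S` misclassified by `h` (with multiplicity). -/
noncomputable def errNeg {p : ℕ} (h : (Fin p → ℝ) × ℝ) (S : Multiset (Fin p → ℝ)) : ℕ :=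
  Multiset.countP (fun x => 0 < hval h x) S

/-- `(Ep, En)` is an `(ap, an)`-bounded feature attack on `(Dp, Dn)`. -/
noncomputable def IsBFA {p : ℕ} (ap an : ℕ) (Dp Dn Ep En : Multiset (Fin p → ℝ)) : Prop :=
  Multiset.card Ep = Multiset.card Dp ∧
  Multiset.card En = Multiset.card Dn ∧
  Multiset.card (Ep - Dp) ≤ ap ∧
  Multiset.card (En - Dn) ≤ an

/-- `(Dp, Dn)` is linearly separable. -/
def LinSep {p : ℕ} (Dp Dn : Multiset (Fin p → ℝ)) : Prop :=
  ∃ h : (Fin p → ℝ) × ℝ, errPos h Dp = 0 ∧ errNeg h Dn = 0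

/-- `h` satisfies the majority constraint on `(Ep, En)`. -/
def Majority {p : ℕ} (h : (Fin p → ℝ) × ℝ) (Ep En : Multiset (Fin p → ℝ)) : Prop :=
  2 * errPos h Ep < Multiset.card Ep ∧ 2 * errNeg h En < Multiset.card En

/-- point on the x-axis -/
noncomputable def pt (a : ℝ) : Fin 2 → ℝ := ![a, 0]

lemma hval_pt (h : (Fin 2 → ℝ) × ℝ) (a : ℝ) : hval h (pt a) = h.1 0 * a + h.2 := by
  simp [hval, pt, Fin.sum_univ_two]

lemma countP_repl {α : Type*} (p : α → Prop) [DecidablePred p] (n : ℕ) (x : α) :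
    Multiset.countP p (Multiset.replicate n x) = if p x then n else 0 := by
  induction n with
  | zero => simp
  | succ n ih => rw [Multiset.replicate_succ, Multiset.countP_cons, ih]; split <;> simp

lemma errPos_replicate (h : (Fin 2 → ℝ) × ℝ) (n : ℕ) (x : Fin 2 → ℝ) :
    errPos h (Multiset.replicate n x) = if hval h x ≤ 0 then n else 0 := by
  rw [errPos, countP_repl]

lemma errNeg_replicate (h : (Fin 2 → ℝ) × ℝ) (n : ℕ) (x : Fin 2 → ℝ) :
    errNeg h (Multiset.replicate n x) = if 0 < hval h x then n else 0 := by
  rw [errNeg, countP_repl]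

lemma errPos_add (h : (Fin 2 → ℝ) × ℝ) (s t : Multiset (Fin 2 → ℝ)) :
    errPos h (s + t) = errPos h s + errPos h t := by
  simp [errPos, Multiset.countP_add]

lemma errNeg_add (h : (Fin 2 → ℝ) × ℝ) (s t : Multiset (Fin 2 → ℝ)) :
    errNeg h (s + t) = errNeg h s + errNeg h t := by
  simp [errNeg, Multiset.countP_add]

theorem stmt9 (Np Nn ap an : ℕ) (hNp : 1 ≤ Np) (hNn : 1 ≤ Nn)
    (hap : ap ≤ Np) (han : an ≤ Nn)
    (hcond : Np < 2 * ap ∨ Nn < 2 * an) :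
    ∃ (Dp Dn Ep En : Multiset (Fin 2 → ℝ)) (hhat : (Fin 2 → ℝ) × ℝ),
      Multiset.card Dp = Np ∧ Multiset.card Dn = Nn ∧
      LinSep Dp Dn ∧ IsBFA ap an Dp Dn Ep En ∧
      Majority hhat Ep En ∧
      (∀ h : (Fin 2 → ℝ) × ℝ, Majority h Ep En →
        errPos hhat Ep + errNeg hhat En ≤ errPos h Ep + errNeg h En) ∧
      (errPos hhat Dp = Np ∨ errNeg hhat Dn = Nn) := by
  rcases hcond with hc | hc
  · -- tamper positives: A = (-1,0) positives, B = (0,0) negatives, C = (1,0) fakes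
    refine ⟨Multiset.replicate Np (pt (-1)), Multiset.replicate Nn (pt 0),
      Multiset.replicate (Np - ap) (pt (-1)) + Multiset.replicate ap (pt 1),
      Multiset.replicate Nn (pt 0), (![1, 0], -1/2), ?_, ?_, ?_, ?_, ?_, ?_, ?_⟩
    · simp
    · simp
    · exact ⟨(![-1, 0], -1/2), by
        simp [errPos_replicate, errNeg_replicate, hval_pt] <;> norm_num⟩
    · refine ⟨by simp [Nat.sub_add_cancel hap], by simp, ?_, by simp⟩
      calc Multiset.card ((Multiset.replicate (Np - ap) (pt (-1)) +
              Multiset.replicate ap (pt 1)) - Multiset.replicate Np (pt (-1)))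
          ≤ Multiset.card ((Multiset.replicate (Np - ap) (pt (-1)) +
              Multiset.replicate ap (pt 1)) - Multiset.replicate (Np - ap) (pt (-1))) := by
            apply Multiset.card_mono
            exact tsub_le_tsub_left (Multiset.replicate_le_replicate _ |>.2 (Nat.sub_le _ _)) _
        _ = ap := by rw [add_tsub_cancel_left]; simp
    · constructor
      · have : errPos (![1, 0], -1/2) (Multiset.replicate (Np - ap) (pt (-1)) +
            Multiset.replicate ap (pt 1)) = Np - ap := by
          simp [errPos_add, errPos_replicate, hval_pt] <;> norm_num
        rw [this]; simp only [Multiset.card_add, Multiset.card_replicate]; omega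
      · have : errNeg (![1, 0], -1/2) (Multiset.replicate Nn (pt 0)) = 0 := by
          simp [errNeg_replicate, hval_pt] <;> norm_num
        rw [this]; simp; omega
    · intro h hm
      obtain ⟨hm1, hm2⟩ := hm
      -- from majority on negatives: hval h (pt 0) ≤ 0
      have hB : hval h (pt 0) ≤ 0 := by
        by_contra hb
        push_neg at hb
        rw [errNeg_replicate] at hm2
        simp [hb] at hm2
        omega
      -- from majority on positives: hval h (pt 1) > 0
      have hC : 0 < hval h (pt 1) := by
        by_contra hcle
        push_neg at hcle
        rw [errPos_add, errPos_replicate, errPos_replicate] at hm1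
        simp only [if_pos hcle] at hm1
        simp only [Multiset.card_add, Multiset.card_replicate] at hm1
        rw [Nat.sub_add_cancel hap] at hm1
        omega
      have hA : hval h (pt (-1)) ≤ 0 := by
        have e : hval h (pt (-1)) = 2 * hval h (pt 0) - hval h (pt 1) := by
          simp [hval_pt]; ring
        rw [e]; linarith
      have h1 : errPos (![1, 0], -1/2) (Multiset.replicate (Np - ap) (pt (-1)) +
          Multiset.replicate ap (pt 1)) = Np - ap := by
        simp [errPos_add, errPos_replicate, hval_pt] <;> norm_num
      have h2 : errNeg (![1, 0], -1/2) (Multiset.replicate Nn (pt 0)) = 0 := by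
        simp [errNeg_replicate, hval_pt] <;> norm_num
      have h3 : Np - ap ≤ errPos h (Multiset.replicate (Np - ap) (pt (-1)) +
          Multiset.replicate ap (pt 1)) := by
        rw [errPos_add, errPos_replicate, errPos_replicate, if_pos hA]
        omega
      omega
    · left
      rw [errPos_replicate]
      have : hval (![1, 0], -1/2) (pt (-1)) ≤ 0 := by rw [hval_pt] <;> norm_num
      rw [if_pos this]
  · -- tamper negatives: A = (0,0) positives, B = (-1,0) negatives, C = (1,0) fakes
    refine ⟨Multiset.replicate Np (pt 0), Multiset.replicate Nn (pt (-1)),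
      Multiset.replicate Np (pt 0),
      Multiset.replicate (Nn - an) (pt (-1)) + Multiset.replicate an (pt 1),
      (![-1, 0], 1/2), ?_, ?_, ?_, ?_, ?_, ?_, ?_⟩
    · simp
    · simp
    · exact ⟨(![1, 0], 1/2), by
        simp [errPos_replicate, errNeg_replicate, hval_pt] <;> norm_num⟩
    · refine ⟨by simp, by simp [Nat.sub_add_cancel han], by simp, ?_⟩
      calc Multiset.card ((Multiset.replicate (Nn - an) (pt (-1)) +
              Multiset.replicate an (pt 1)) - Multiset.replicate Nn (pt (-1)))
          ≤ Multiset.card ((Multiset.replicate (Nn - an) (pt (-1)) +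
              Multiset.replicate an (pt 1)) - Multiset.replicate (Nn - an) (pt (-1))) := by
            apply Multiset.card_mono
            exact tsub_le_tsub_left (Multiset.replicate_le_replicate _ |>.2 (Nat.sub_le _ _)) _
        _ = an := by rw [add_tsub_cancel_left]; simp
    · constructor
      · have : errPos (![-1, 0], 1/2) (Multiset.replicate Np (pt 0)) = 0 := by
          simp [errPos_replicate, hval_pt] <;> norm_num
        rw [this]; simp; omega
      · have : errNeg (![-1, 0], 1/2) (Multiset.replicate (Nn - an) (pt (-1)) +
            Multiset.replicate an (pt 1)) = Nn - an := by
          simp [errNeg_add, errNeg_replicate, hval_pt] <;> norm_num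
        rw [this]; simp only [Multiset.card_add, Multiset.card_replicate]; omega
    · intro h hm
      obtain ⟨hm1, hm2⟩ := hm
      have hA : 0 < hval h (pt 0) := by
        by_contra hb
        push_neg at hb
        rw [errPos_replicate] at hm1
        simp [hb] at hm1
        omega
      have hC : hval h (pt 1) ≤ 0 := by
        by_contra hcle
        push_neg at hcle
        rw [errNeg_add, errNeg_replicate, errNeg_replicate] at hm2
        simp only [if_pos hcle] at hm2
        simp only [Multiset.card_add, Multiset.card_replicate] at hm2
        rw [Nat.sub_add_cancel han] at hm2
        omega
      have hB : 0 < hval h (pt (-1)) := by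
        have e : hval h (pt (-1)) = 2 * hval h (pt 0) - hval h (pt 1) := by
          simp [hval_pt]; ring
        rw [e]; linarith
      have h1 : errPos (![-1, 0], 1/2) (Multiset.replicate Np (pt 0)) = 0 := by
        simp [errPos_replicate, hval_pt] <;> norm_num
      have h2 : errNeg (![-1, 0], 1/2) (Multiset.replicate (Nn - an) (pt (-1)) +
          Multiset.replicate an (pt 1)) = Nn - an := by
        simp [errNeg_add, errNeg_replicate, hval_pt] <;> norm_num
      have h3 : Nn - an ≤ errNeg h (Multiset.replicate (Nn - an) (pt (-1)) +
          Multiset.replicate an (pt 1)) := by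
        rw [errNeg_add, errNeg_replicate, errNeg_replicate, if_pos hB]
        omega
      omega
    · right
      rw [errNeg_replicate]
      have : 0 < hval (![-1, 0], 1/2) (pt (-1)) := by rw [hval_pt] <;> norm_num
      rw [if_pos this]
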